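/- Define polynomials q_k ∈ ℝ[s,t] by the formal power series expansion -1/(1 + t·x + s·x²)² = ∑_{k≥0} q_k(s,t)·x^k. Then q_k = (-1)^{k+1} · ∑_{q=0}^{⌊k/2⌋} (-1)^q · (q+1) · C(k+1-q, q+1) · s^q · t^{k-2q}. -/

import Mathlib

noncomputable section

/-- The polynomial ring ℝ[s,t]. -/
abbrev Rst : Type := MvPolynomial (Fin 2) ℝ

def s : Rst := MvPolynomial.X 0
def t : Rst := MvPolynomial.X 1

namespace QkAux

open Finset PowerSeries

/-- coefficient term for `1/(1+t x+s x²)`. -/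
def fb (n q : ℕ) : Rst := (-1) ^ q * ((n - q).choose q : Rst) * s ^ q * t ^ (n - 2 * q)

/-- coefficient term for `-1/(1+t x+s x²)²`. -/
def fa (n q : ℕ) : Rst :=
  (-1) ^ q * ((q + 1 : ℕ) : Rst) * ((n + 1 - q).choose (q + 1) : Rst) * s ^ q * t ^ (n - 2 * q)

def bb (n : ℕ) : Rst := (-1 : Rst) ^ n * ∑ q ∈ Finset.range (n / 2 + 1), fb n q

def aa (n : ℕ) : Rst := (-1 : Rst) ^ (n + 1) * ∑ q ∈ Finset.range (n / 2 + 1), fa n q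

lemma fb_zero {n q : ℕ} (h : n / 2 < q) : fb n q = 0 := by
  have : (n - q).choose q = 0 := Nat.choose_eq_zero_of_lt (by omega)
  simp [fb, this]

lemma fa_zero {n q : ℕ} (h : n / 2 < q) : fa n q = 0 := by
  have : (n + 1 - q).choose (q + 1) = 0 := Nat.choose_eq_zero_of_lt (by omega)
  simp [fa, this]

lemma bb_pad (n K : ℕ) (h : n / 2 + 1 ≤ K) :
    bb n = (-1 : Rst) ^ n * ∑ q ∈ Finset.range K, fb n q := by
  unfold bb
  congr 1
  refine Finset.sum_subset (Finset.range_subset_range.2 h) fun q _ hq => ?_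
  exact fb_zero (by simp only [Finset.mem_range] at hq; omega)

lemma aa_pad (n K : ℕ) (h : n / 2 + 1 ≤ K) :
    aa n = (-1 : Rst) ^ (n + 1) * ∑ q ∈ Finset.range K, fa n q := by
  unfold aa
  congr 1
  refine Finset.sum_subset (Finset.range_subset_range.2 h) fun q _ hq => ?_
  exact fa_zero (by simp only [Finset.mem_range] at hq; omega)

lemma key_b0 (m : ℕ) : fb (m + 2) 0 - t * fb (m + 1) 0 = 0 := by
  simp only [fb, pow_zero, Nat.sub_zero, Nat.choose_zero_right, Nat.cast_one, Nat.mul_zero]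
  ring_nf

lemma key_b (m i : ℕ) (hi : 2 * i ≤ m) :
    fb (m + 2) (i + 1) - t * fb (m + 1) (i + 1) = -(s * fb m i) := by
  unfold fb
  rcases eq_or_lt_of_le hi with h | h
  · obtain rfl : m = 2 * i := h.symm
    have e1 : 2 * i + 2 - (i + 1) = i + 1 := by omega
    have e2 : 2 * i + 1 - (i + 1) = i := by omega
    have e3 : 2 * i + 2 - 2 * (i + 1) = 0 := by omega
    have e4 : 2 * i + 1 - 2 * (i + 1) = 0 := by omega
    have e5 : 2 * i - 2 * i = 0 := by omega
    have e6 : 2 * i - i = i := by omega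
    simp only [e1, e2, e3, e4, e5, e6]
    have c1 : (i + 1).choose (i + 1) = 1 := Nat.choose_self _
    have c2 : i.choose (i + 1) = 0 := Nat.choose_eq_zero_of_lt (Nat.lt_succ_self i)
    have c3 : i.choose i = 1 := Nat.choose_self _
    simp only [c1, c2, c3]
    push_cast
    ring
  · obtain ⟨j, rfl⟩ : ∃ j, m = 2 * i + j + 1 := ⟨m - 2 * i - 1, by omega⟩
    have e1 : 2 * i + j + 1 + 2 - (i + 1) = (i + j + 1) + 1 := by omega
    have e2 : 2 * i + j + 1 + 1 - (i + 1) = i + j + 1 := by omega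
    have e3 : 2 * i + j + 1 + 2 - 2 * (i + 1) = j + 1 := by omega
    have e4 : 2 * i + j + 1 + 1 - 2 * (i + 1) = j := by omega
    have e5 : 2 * i + j + 1 - 2 * i = j + 1 := by omega
    have e6 : 2 * i + j + 1 - i = i + j + 1 := by omega
    simp only [e1, e2, e3, e4, e5, e6]
    have c1 : ((i + j + 1) + 1).choose (i + 1)
        = (i + j + 1).choose i + (i + j + 1).choose (i + 1) := Nat.choose_succ_succ _ _
    simp only [c1]
    push_cast
    ring

lemma key_a0 (m : ℕ) : fa (m + 2) 0 - t * fa (m + 1) 0 - fb (m + 2) 0 = 0 := by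
  simp only [fa, fb, pow_zero, Nat.sub_zero, Nat.choose_zero_right, Nat.mul_zero, zero_add,
    Nat.choose_one_right, Nat.cast_one]
  push_cast
  ring_nf

lemma key_a (m i : ℕ) (hi : 2 * i ≤ m) :
    fa (m + 2) (i + 1) - t * fa (m + 1) (i + 1) - fb (m + 2) (i + 1) = -(s * fa m i) := by
  unfold fa fb
  rcases eq_or_lt_of_le hi with h | h
  · obtain rfl : m = 2 * i := h.symm
    have e1 : 2 * i + 2 + 1 - (i + 1) = i + 2 := by omega
    have e2 : 2 * i + 1 + 1 - (i + 1) = i + 1 := by omega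
    have e3 : 2 * i + 2 - (i + 1) = i + 1 := by omega
    have e4 : 2 * i + 2 - 2 * (i + 1) = 0 := by omega
    have e5 : 2 * i + 1 - 2 * (i + 1) = 0 := by omega
    have e6 : 2 * i - 2 * i = 0 := by omega
    have e7 : 2 * i + 1 - i = i + 1 := by omega
    simp only [e1, e2, e3, e4, e5, e6, e7]
    have c1 : (i + 2).choose (i + 1 + 1) = 1 := Nat.choose_self _
    have c2 : (i + 1).choose (i + 1 + 1) = 0 := Nat.choose_eq_zero_of_lt (Nat.lt_succ_self _)
    have c3 : (i + 1).choose (i + 1) = 1 := Nat.choose_self _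
    simp only [c1, c2, c3]
    push_cast
    ring
  · obtain ⟨j, rfl⟩ : ∃ j, m = 2 * i + j + 1 := ⟨m - 2 * i - 1, by omega⟩
    have e1 : 2 * i + j + 1 + 2 + 1 - (i + 1) = (i + j + 2) + 1 := by omega
    have e2 : 2 * i + j + 1 + 1 + 1 - (i + 1) = i + j + 2 := by omega
    have e3 : 2 * i + j + 1 + 2 - (i + 1) = (i + j + 1) + 1 := by omega
    have e4 : 2 * i + j + 1 + 2 - 2 * (i + 1) = j + 1 := by omega
    have e5 : 2 * i + j + 1 + 1 - 2 * (i + 1) = j := by omega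
    have e6 : 2 * i + j + 1 - 2 * i = j + 1 := by omega
    have e7 : 2 * i + j + 1 + 1 - i = (i + j + 1) + 1 := by omega
    simp only [e1, e2, e3, e4, e5, e6, e7]
    have c1 : ((i + j + 2) + 1).choose (i + 1 + 1)
        = (i + j + 2).choose (i + 1) + (i + j + 2).choose (i + 1 + 1) := Nat.choose_succ_succ _ _
    have c2 : ((i + j + 1) + 1).choose (i + 1)
        = (i + j + 1).choose i + (i + j + 1).choose (i + 1) := Nat.choose_succ_succ _ _
    have c3 : (i + j + 2).choose (i + 1)
        = (i + j + 1).choose i + (i + j + 1).choose (i + 1) := Nat.choose_succ_succ _ _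
    simp only [c1, c2, c3]
    push_cast
    ring

lemma bb_rec (m : ℕ) : bb (m + 2) + t * bb (m + 1) + s * bb m = 0 := by
  have h2 : (m + 2) / 2 + 1 ≤ m / 2 + 2 := by omega
  have h1 : (m + 1) / 2 + 1 ≤ m / 2 + 2 := by omega
  have h0 : m / 2 + 1 ≤ m / 2 + 2 := by omega
  rw [bb_pad (m + 2) (m / 2 + 2) h2, bb_pad (m + 1) (m / 2 + 2) h1, bb_pad m (m / 2 + 2) h0]
  have key : ∑ q ∈ Finset.range (m / 2 + 2), (fb (m + 2) q - t * fb (m + 1) q)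
      = -∑ q ∈ Finset.range (m / 2 + 2), s * fb m q := by
    rw [Finset.sum_range_succ' (fun q => fb (m + 2) q - t * fb (m + 1) q) (m / 2 + 1)]
    rw [Finset.sum_range_succ (fun q => s * fb m q) (m / 2 + 1)]
    rw [fb_zero (show m / 2 < m / 2 + 1 by omega)]
    rw [Finset.sum_congr rfl fun i hi => key_b m i (by
      simp only [Finset.mem_range] at hi; omega)]
    rw [key_b0 m]
    rw [Finset.sum_neg_distrib]
    ring
  have e1 : ∑ q ∈ Finset.range (m / 2 + 2), (fb (m + 2) q - t * fb (m + 1) q)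
      = (∑ q ∈ Finset.range (m / 2 + 2), fb (m + 2) q)
        - t * ∑ q ∈ Finset.range (m / 2 + 2), fb (m + 1) q := by
    rw [Finset.sum_sub_distrib, Finset.mul_sum]
  have e2 : ∑ q ∈ Finset.range (m / 2 + 2), s * fb m q
      = s * ∑ q ∈ Finset.range (m / 2 + 2), fb m q := (Finset.mul_sum _ _ _).symm
  rw [e1, e2] at key
  linear_combination ((-1 : Rst) ^ m) * key

lemma aa_rec (m : ℕ) : aa (m + 2) + t * aa (m + 1) + s * aa m = -bb (m + 2) := by
  have h2 : (m + 2) / 2 + 1 ≤ m / 2 + 2 := by omega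
  have h1 : (m + 1) / 2 + 1 ≤ m / 2 + 2 := by omega
  have h0 : m / 2 + 1 ≤ m / 2 + 2 := by omega
  rw [aa_pad (m + 2) (m / 2 + 2) h2, aa_pad (m + 1) (m / 2 + 2) h1, aa_pad m (m / 2 + 2) h0,
    bb_pad (m + 2) (m / 2 + 2) h2]
  have key : ∑ q ∈ Finset.range (m / 2 + 2),
        (fa (m + 2) q - t * fa (m + 1) q - fb (m + 2) q)
      = -∑ q ∈ Finset.range (m / 2 + 2), s * fa m q := by
    rw [Finset.sum_range_succ'
      (fun q => fa (m + 2) q - t * fa (m + 1) q - fb (m + 2) q) (m / 2 + 1)]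
    rw [Finset.sum_range_succ (fun q => s * fa m q) (m / 2 + 1)]
    rw [fa_zero (show m / 2 < m / 2 + 1 by omega)]
    rw [Finset.sum_congr rfl fun i hi => key_a m i (by
      simp only [Finset.mem_range] at hi; omega)]
    rw [key_a0 m]
    rw [Finset.sum_neg_distrib]
    ring
  have e1 : ∑ q ∈ Finset.range (m / 2 + 2),
        (fa (m + 2) q - t * fa (m + 1) q - fb (m + 2) q)
      = (∑ q ∈ Finset.range (m / 2 + 2), fa (m + 2) q)
        - t * (∑ q ∈ Finset.range (m / 2 + 2), fa (m + 1) q)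
        - ∑ q ∈ Finset.range (m / 2 + 2), fb (m + 2) q := by
    rw [Finset.sum_sub_distrib, Finset.sum_sub_distrib, Finset.mul_sum]
  have e2 : ∑ q ∈ Finset.range (m / 2 + 2), s * fa m q
      = s * ∑ q ∈ Finset.range (m / 2 + 2), fa m q := (Finset.mul_sum _ _ _).symm
  rw [e1, e2] at key
  linear_combination ((-1 : Rst) ^ (m + 1)) * key

def P : PowerSeries Rst :=
  (1 : PowerSeries Rst) + PowerSeries.C t * PowerSeries.X
    + PowerSeries.C s * PowerSeries.X ^ 2

lemma P_mul (φ : PowerSeries Rst) :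
    P * φ = φ + PowerSeries.C t * (PowerSeries.X * φ)
      + PowerSeries.C s * (PowerSeries.X ^ 2 * φ) := by
  unfold P; ring

lemma coeff_P_mul_zero (φ : PowerSeries Rst) :
    PowerSeries.coeff 0 (P * φ) = PowerSeries.coeff 0 φ := by
  rw [P_mul]
  simp [PowerSeries.coeff_X_pow_mul']

lemma coeff_P_mul_one (φ : PowerSeries Rst) :
    PowerSeries.coeff 1 (P * φ)
      = PowerSeries.coeff 1 φ + t * PowerSeries.coeff 0 φ := by
  rw [P_mul]
  simp [PowerSeries.coeff_X_pow_mul', PowerSeries.coeff_succ_X_mul]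

lemma coeff_P_mul (φ : PowerSeries Rst) (n : ℕ) :
    PowerSeries.coeff (n + 2) (P * φ)
      = PowerSeries.coeff (n + 2) φ + t * PowerSeries.coeff (n + 1) φ
        + s * PowerSeries.coeff n φ := by
  rw [P_mul]
  simp only [map_add, PowerSeries.coeff_C_mul]
  rw [show (n + 2) = (n + 1) + 1 from rfl, PowerSeries.coeff_succ_X_mul,
    show (n + 1) + 1 = n + 2 from rfl, PowerSeries.coeff_X_pow_mul]

lemma bb_zero : bb 0 = 1 := by simp [bb, fb]

lemma bb_one : bb 1 = -t := by simp [bb, fb]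

lemma aa_zero : aa 0 = -1 := by simp [aa, fa]

lemma aa_one : aa 1 = 2 * t := by simp [aa, fa]

lemma hPB : P * PowerSeries.mk bb = 1 := by
  apply PowerSeries.ext
  intro n
  match n with
  | 0 => rw [coeff_P_mul_zero]; simp [bb_zero]
  | 1 =>
      rw [coeff_P_mul_one]
      simp [bb_zero, bb_one]
  | (m + 2) =>
      rw [coeff_P_mul]
      simp only [PowerSeries.coeff_mk]
      rw [PowerSeries.coeff_one, if_neg (by omega)]
      exact bb_rec m

lemma hPA : P * PowerSeries.mk aa = -PowerSeries.mk bb := by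
  apply PowerSeries.ext
  intro n
  match n with
  | 0 =>
      rw [coeff_P_mul_zero]
      simp [aa_zero, bb_zero]
  | 1 =>
      rw [coeff_P_mul_one]
      simp only [PowerSeries.coeff_mk, map_neg]
      rw [aa_zero, aa_one, bb_one]
      ring
  | (m + 2) =>
      rw [coeff_P_mul]
      simp only [PowerSeries.coeff_mk, map_neg]
      exact aa_rec m

lemma P_ne_zero : P ≠ 0 := by
  intro h
  have h1 : PowerSeries.constantCoeff P = 1 := by
    simp [P]
  rw [h] at h1
  simp at h1

end QkAux

/-- If `N = -1/(1+t·x+s·x²)²` in `ℝ[s,t][[x]]`, i.e. `(1+t·x+s·x²)² · N = -1`,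
with coefficients `q_k`, then
`q_k = (-1)^{k+1} ∑_{q=0}^{⌊k/2⌋} (-1)^q (q+1) C(k+1-q,q+1) s^q t^{k-2q}`. -/
theorem qk_explicit (N : PowerSeries Rst)
    (hN : ((1 : PowerSeries Rst) + PowerSeries.C t * PowerSeries.X
        + PowerSeries.C s * PowerSeries.X ^ 2) ^ 2 * N = -1) (k : ℕ) :
    PowerSeries.coeff k N
      = (-1 : Rst) ^ (k + 1) * ∑ q ∈ Finset.range (k / 2 + 1),
          (-1 : Rst) ^ q * ((q + 1 : ℕ) : Rst) * ((k + 1 - q).choose (q + 1) : Rst)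
            * s ^ q * t ^ (k - 2 * q) := by
  have hN' : QkAux.P ^ 2 * N = -1 := hN
  have hM : QkAux.P ^ 2 * PowerSeries.mk QkAux.aa = -1 := by
    rw [sq, mul_assoc, QkAux.hPA, mul_neg, QkAux.hPB]
  have hP2 : QkAux.P ^ 2 ≠ 0 := pow_ne_zero 2 QkAux.P_ne_zero
  have hNM : N = PowerSeries.mk QkAux.aa :=
    mul_left_cancel₀ hP2 (hN'.trans hM.symm)
  rw [hNM, PowerSeries.coeff_mk]
  rfl
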